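/- Define, for a symmetric positive definite matrix-valued function S(x,α) and probability measure π, the quasi-entropy Ỹ(α) := (1/2)·( ∫ log|S^{-1}(x,α)S(x,α₀)| π(dx) − d·log( (1/d)·∫ tr(S^{-1}(x,α)S(x,α₀)) π(dx) ) ). Then Ỹ(α) ≤ 0 for every α, and Ỹ(α) = 0 if and only if the eigenvalues λ₁(x,α), …, λ_d(x,α) of S^{-1}(x,α)S(x,α₀) are π-a.e. constant in x and all equal to each other. -/

import Mathlib

open Matrix MeasureTheory


lemma log_tangent {y m : ℝ} (hy : 0 < y) (hm : 0 < m) :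
    Real.log y ≤ Real.log m + (y - m) / m := by
  have h := Real.log_le_sub_one_of_pos (div_pos hy hm)
  rw [Real.log_div hy.ne' hm.ne'] at h
  have h2 : y / m - 1 = (y - m) / m := by field_simp
  linarith

lemma log_tangent_eq {y m : ℝ} (hy : 0 < y) (hm : 0 < m)
    (h : Real.log y = Real.log m + (y - m) / m) : y = m := by
  by_contra hne
  have h1 : y / m ≠ 1 := by
    intro h1; exact hne (by field_simp at h1; linarith)
  have := Real.log_lt_sub_one_of_pos (div_pos hy hm) h1
  rw [Real.log_div hy.ne' hm.ne'] at this
  have h2 : y / m - 1 = (y - m) / m := by field_simp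
  linarith

lemma posDef_conj {d : ℕ} {B R : Matrix (Fin d) (Fin d) ℝ} (hB : B.PosDef)
    (hR : R.IsHermitian) (hdet : IsUnit R.det) : (R * B * R).PosDef := by
  have hRt : Rᵀ = R := by
    have := hR.eq; rwa [conjTranspose_eq_transpose_of_trivial] at this
  have hBt : Bᵀ = B := by
    have := hB.1.eq; rwa [conjTranspose_eq_transpose_of_trivial] at this
  refine posDef_iff_dotProduct_mulVec.mpr ⟨?_, ?_⟩
  · show (R * B * R)ᴴ = _
    simp [conjTranspose_mul, conjTranspose_eq_transpose_of_trivial, hRt, hBt, Matrix.mul_assoc]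
  · intro x hx
    have hinj : Function.Injective R.mulVec :=
      mulVec_injective_iff_isUnit.mpr ((isUnit_iff_isUnit_det R).mpr hdet)
    have hRx : R *ᵥ x ≠ 0 := fun h => hx (hinj (show R *ᵥ x = R *ᵥ 0 by simpa using h))
    have hv : x ᵥ* R = R *ᵥ x := by
      conv_lhs => rw [← hRt]
      rw [vecMul_transpose]
    have key : star x ⬝ᵥ (R * B * R) *ᵥ x = star (R *ᵥ x) ⬝ᵥ B *ᵥ (R *ᵥ x) := by
      rw [star_trivial, star_trivial, ← mulVec_mulVec, ← mulVec_mulVec, dotProduct_mulVec, hv]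
    rw [key]
    exact hB.dotProduct_mulVec_pos (by simpa using hRx)

lemma trace_eq_sum_ev {d : ℕ} {C : Matrix (Fin d) (Fin d) ℝ} (hC : C.IsHermitian) :
    C.trace = ∑ i, hC.eigenvalues i := by
  conv_lhs => rw [hC.spectral_theorem, Unitary.conjStarAlgAut_apply]
  rw [trace_mul_comm, ← Matrix.mul_assoc, (Matrix.mem_unitaryGroup_iff').mp hC.eigenvectorUnitary.2,
    Matrix.one_mul, trace_diagonal, RCLike.ofReal_real_eq_id]
  simp

lemma eq_smul_one_of_ev_const {d : ℕ} {C : Matrix (Fin d) (Fin d) ℝ} (hC : C.IsHermitian)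
    {c : ℝ} (h : ∀ i, hC.eigenvalues i = c) : C = c • 1 := by
  have hev : hC.eigenvalues = fun _ => c := funext h
  have hdiag : diagonal (RCLike.ofReal ∘ hC.eigenvalues) = c • (1 : Matrix (Fin d) (Fin d) ℝ) := by
    rw [RCLike.ofReal_real_eq_id, smul_one_eq_diagonal, hev]
    rfl
  conv_lhs => rw [hC.spectral_theorem, Unitary.conjStarAlgAut_apply, hdiag]
  rw [mul_smul_comm, smul_mul_assoc, Matrix.mul_one,
    (Matrix.mem_unitaryGroup_iff).mp hC.eigenvectorUnitary.2]

lemma inv_mul_smul_self {d : ℕ} {A : Matrix (Fin d) (Fin d) ℝ} (hA : A.PosDef) (c : ℝ) :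
    A⁻¹ * (c • A) = c • (1 : Matrix (Fin d) (Fin d) ℝ) := by
  rw [Matrix.mul_smul, nonsing_inv_mul _ (isUnit_iff_ne_zero.mpr hA.det_pos.ne')]

open scoped MatrixOrder in
lemma key_pointwise {d : ℕ} (hd : 0 < d) {A B : Matrix (Fin d) (Fin d) ℝ}
    (hA : A.PosDef) (hB : B.PosDef) :
    0 < (A⁻¹ * B).trace ∧
    Real.log (A⁻¹ * B).det ≤ (d : ℝ) * Real.log ((A⁻¹ * B).trace / d) ∧
    (Real.log (A⁻¹ * B).det = (d : ℝ) * Real.log ((A⁻¹ * B).trace / d) ↔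
      ∃ c : ℝ, 0 < c ∧ B = c • A) := by
  have hAinv : A⁻¹.PosDef := hA.inv
  set R := CFC.sqrt A⁻¹ with hRdef
  have hRps : R.PosSemidef := nonneg_iff_posSemidef.mp (CFC.sqrt_nonneg _)
  have hRR : R * R = A⁻¹ := CFC.sqrt_mul_sqrt_self A⁻¹ hAinv.posSemidef.nonneg
  have hdetAinv : 0 < A⁻¹.det := hAinv.det_pos
  have hdetR : IsUnit R.det := by
    have h1 : R.det * R.det = A⁻¹.det := by rw [← det_mul, hRR]
    refine isUnit_iff_ne_zero.mpr (fun h => ?_)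
    rw [h, mul_zero] at h1
    exact hdetAinv.ne' h1.symm
  have hC : (R * B * R).PosDef := posDef_conj hB hRps.1 hdetR
  have htr : (A⁻¹ * B).trace = (R * B * R).trace := by
    rw [← hRR, Matrix.mul_assoc, trace_mul_comm]
  have hdet : (A⁻¹ * B).det = (R * B * R).det := by
    rw [det_mul, ← hRR, det_mul, det_mul, det_mul]; ring
  set ev := hC.1.eigenvalues with hevdef
  have hevpos : ∀ i, 0 < ev i := fun i => hC.eigenvalues_pos i
  have hdet' : (A⁻¹ * B).det = ∏ i, ev i := by
    rw [hdet, hC.1.det_eq_prod_eigenvalues]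
    rfl
  have htr' : (A⁻¹ * B).trace = ∑ i, ev i := by rw [htr, trace_eq_sum_ev hC.1]
  have : Nonempty (Fin d) := ⟨⟨0, hd⟩⟩
  have hne : (Finset.univ : Finset (Fin d)).Nonempty := Finset.univ_nonempty
  have hs : 0 < ∑ i, ev i := Finset.sum_pos (fun i _ => hevpos i) hne
  have htrpos : 0 < (A⁻¹ * B).trace := by rw [htr']; exact hs
  set m := (∑ i, ev i) / d with hmdef
  have hdpos : (0 : ℝ) < d := Nat.cast_pos.mpr hd
  have hm : 0 < m := div_pos hs hdpos
  have hlogdet : Real.log (A⁻¹ * B).det = ∑ i, Real.log (ev i) := by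
    rw [hdet']
    exact Real.log_prod (fun i _ => (hevpos i).ne')
  have hmtr : (A⁻¹ * B).trace / d = m := by rw [htr']
  -- sum of the linear terms equals d * log m
  have hlin : ∑ _i : Fin d, ((ev _i - m) / m) = 0 := by
    rw [← Finset.sum_div, Finset.sum_sub_distrib, Finset.sum_const, Finset.card_univ,
      Fintype.card_fin, hmdef]
    field_simp
    rw [nsmul_eq_mul, mul_div_cancel₀ _ hdpos.ne']; ring
  have hsum_tangent : ∑ i, (Real.log m + (ev i - m) / m) = d * Real.log m := by
    rw [Finset.sum_add_distrib, hlin, add_zero, Finset.sum_const, Finset.card_univ,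
      Fintype.card_fin, nsmul_eq_mul]
  refine ⟨htrpos, ?_, ?_⟩
  · rw [hlogdet, hmtr, ← hsum_tangent]
    exact Finset.sum_le_sum (fun i _ => log_tangent (hevpos i) hm)
  constructor
  · intro heq
    -- each tangent inequality is equality
    have hδ : ∀ i ∈ Finset.univ, (Real.log m + (ev i - m) / m) - Real.log (ev i) = 0 := by
      have hsum0 : ∑ i, ((Real.log m + (ev i - m) / m) - Real.log (ev i)) = 0 := by
        rw [Finset.sum_sub_distrib, hsum_tangent, ← hlogdet, heq, hmtr, sub_self]
      exact (Finset.sum_eq_zero_iff_of_nonneg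
        (fun i _ => sub_nonneg.mpr (log_tangent (hevpos i) hm))).mp hsum0
    have hevm : ∀ i, ev i = m := fun i =>
      log_tangent_eq (hevpos i) hm (by have := hδ i (Finset.mem_univ i); linarith)
    have hCm : R * B * R = m • 1 := eq_smul_one_of_ev_const hC.1 hevm
    refine ⟨m, hm, ?_⟩
    have hB' : R⁻¹ * (R * B * R) * R⁻¹ = B := by
      rw [Matrix.mul_assoc R B R, nonsing_inv_mul_cancel_left _ _ hdetR,
        mul_nonsing_inv_cancel_right _ _ hdetR]
    rw [← hB', hCm, mul_smul_comm, smul_mul_assoc, Matrix.mul_one, ← Matrix.mul_inv_rev, hRR,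
      Matrix.nonsing_inv_nonsing_inv _ (isUnit_iff_ne_zero.mpr hA.det_pos.ne')]
  · rintro ⟨c, hc, rfl⟩
    have h1 : A⁻¹ * c • A = c • (1 : Matrix (Fin d) (Fin d) ℝ) := inv_mul_smul_self hA c
    rw [h1, det_smul, trace_smul, det_one, trace_one, smul_eq_mul, mul_one]
    simp only [Fintype.card_fin]
    rw [Real.log_pow]
    have : c * d / d = c := by field_simp
    rw [this]


set_option maxHeartbeats 1000000 in
/-- The quasi-entropy
`Ỹ(α) = (1/2)(∫ log|S(x,α)⁻¹S(x,α₀)| dπ − d·log((1/d)∫ tr(S(x,α)⁻¹S(x,α₀)) dπ))`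
satisfies `Ỹ(α) ≤ 0`, with equality iff the eigenvalues of `S(x,α)⁻¹S(x,α₀)` are
π-a.e. constant in `x` and all equal (i.e. `S(x,α₀) = c·S(x,α)` π-a.e. for a
constant `c > 0`). -/
theorem stmt_14 {d : ℕ} (hd : 0 < d) {A : Type*} (a₀ : A)
    (π : Measure (Fin d → ℝ)) [IsProbabilityMeasure π]
    (S : A → (Fin d → ℝ) → Matrix (Fin d) (Fin d) ℝ)
    (hpd : ∀ a x, (S a x).PosDef)
    (hint1 : ∀ a, Integrable (fun x => Real.log ((S a x)⁻¹ * S a₀ x).det) π)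
    (hint2 : ∀ a, Integrable (fun x => ((S a x)⁻¹ * S a₀ x).trace) π)
    (a : A) :
    let Y : ℝ := (1 / 2) *
      ((∫ x, Real.log ((S a x)⁻¹ * S a₀ x).det ∂π) -
        (d : ℝ) * Real.log ((1 / (d : ℝ)) * ∫ x, ((S a x)⁻¹ * S a₀ x).trace ∂π))
    Y ≤ 0 ∧ (Y = 0 ↔ ∃ c : ℝ, 0 < c ∧ ∀ᵐ x ∂π, S a₀ x = c • S a x) := by
  intro Y
  have hkey := fun x => key_pointwise hd (hpd a x) (hpd a₀ x)
  set f : (Fin d → ℝ) → ℝ := fun x => Real.log ((S a x)⁻¹ * S a₀ x).det with hfdef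
  set t : (Fin d → ℝ) → ℝ := fun x => ((S a x)⁻¹ * S a₀ x).trace with htdef
  have htpos : ∀ x, 0 < t x := fun x => (hkey x).1
  have hAMGM : ∀ x, f x ≤ (d : ℝ) * Real.log (t x / d) := fun x => (hkey x).2.1
  have hintf : Integrable f π := hint1 a
  have hintt : Integrable t π := hint2 a
  have hdpos : (0 : ℝ) < d := Nat.cast_pos.mpr hd
  set T := ∫ x, t x ∂π with hTdef
  have hTpos : 0 < T := by
    rw [hTdef, integral_pos_iff_support_of_nonneg_ae
      (Filter.Eventually.of_forall (fun x => (htpos x).le)) hintt]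
    have hsupp : Function.support t = Set.univ := Set.eq_univ_of_forall (fun x => (htpos x).ne')
    rw [hsupp, measure_univ]
    exact zero_lt_one
  set g : (Fin d → ℝ) → ℝ := fun x => Real.log (t x / d) with hgdef
  have hgm : AEStronglyMeasurable g π := by
    have h1 : AEMeasurable t π := hintt.aemeasurable
    exact (Real.measurable_log.comp_aemeasurable (h1.div_const (d : ℝ))).aestronglyMeasurable
  have hlg : ∀ x, (1 / (d : ℝ)) * f x ≤ g x := by
    intro x
    have h1 := hAMGM x
    have h2 : (1 / (d : ℝ)) * f x ≤ (1 / (d : ℝ)) * ((d : ℝ) * g x) :=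
      mul_le_mul_of_nonneg_left h1 (by positivity)
    have h3 : (1 / (d : ℝ)) * ((d : ℝ) * g x) = g x := by field_simp
    linarith
  have hug : ∀ x, g x ≤ t x / d - 1 := fun x =>
    Real.log_le_sub_one_of_pos (div_pos (htpos x) hdpos)
  have hintg : Integrable g π := by
    have hbound : Integrable (fun x => |(1 / (d : ℝ)) * f x| + |t x / d - 1|) π :=
      ((hintf.const_mul _).abs.add (((hintt.div_const _)).sub (integrable_const 1)).abs)
    refine hbound.mono' hgm (Filter.Eventually.of_forall (fun x => ?_))
    rw [Real.norm_eq_abs]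
    refine abs_le.mpr ⟨?_, ?_⟩
    · have := neg_abs_le ((1 / (d : ℝ)) * f x)
      have := abs_nonneg (t x / d - 1)
      have := hlg x
      linarith
    · have := le_abs_self (t x / d - 1)
      have := abs_nonneg ((1 / (d : ℝ)) * f x)
      have := hug x
      linarith
  set D₁ : (Fin d → ℝ) → ℝ := fun x => (d : ℝ) * g x - f x with hD1def
  set D₂ : (Fin d → ℝ) → ℝ := fun x => (Real.log (T / d) + (t x - T) / T) - g x with hD2def
  have harg : ∀ y : ℝ, (y / d - T / d) / (T / d) = (y - T) / T := by
    intro y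
    field_simp
  have hD1nn : ∀ x, 0 ≤ D₁ x := fun x => sub_nonneg.mpr (hAMGM x)
  have hD2nn : ∀ x, 0 ≤ D₂ x := by
    intro x
    have h1 := log_tangent (div_pos (htpos x) hdpos) (div_pos hTpos hdpos)
    rw [harg] at h1
    simp only [hD2def, hgdef]
    linarith
  have hD1int : Integrable D₁ π := (hintg.const_mul _).sub hintf
  have hD2int : Integrable D₂ π :=
    ((integrable_const (Real.log (T / d))).add ((hintt.sub (integrable_const T)).div_const T)).sub
      hintg
  have hID1 : ∫ x, D₁ x ∂π = (d : ℝ) * (∫ x, g x ∂π) - ∫ x, f x ∂π := by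
    rw [integral_sub (hintg.const_mul _) hintf, integral_const_mul]
  have hI2a : ∫ x, (t x - T) / T ∂π = 0 := by
    rw [integral_div, integral_sub hintt (integrable_const T), integral_const]
    simp [← hTdef]
  have hi2 : Integrable (fun x => (t x - T) / T) π := (hintt.sub (integrable_const T)).div_const T
  have hi1 : Integrable (fun x => Real.log (T / (d : ℝ)) + (t x - T) / T) π :=
    (integrable_const _).add hi2
  have e2 : (∫ x, (Real.log (T / (d : ℝ)) + (t x - T) / T) ∂π)
      = Real.log (T / (d : ℝ)) + ∫ x, (t x - T) / T ∂π := by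
    rw [integral_add (integrable_const _) hi2, integral_const]
    simp
  have e3 : (∫ x, D₂ x ∂π)
      = (∫ x, (Real.log (T / (d : ℝ)) + (t x - T) / T) ∂π) - ∫ x, g x ∂π :=
    integral_sub hi1 hintg
  have hID2 : ∫ x, D₂ x ∂π = Real.log (T / d) - ∫ x, g x ∂π := by
    rw [e3, e2, hI2a, add_zero]
  have hTd : (1 / (d : ℝ)) * T = T / d := one_div_mul_eq_div _ _
  have hYeq : Y = -(1 / 2) * ((∫ x, D₁ x ∂π) + (d : ℝ) * ∫ x, D₂ x ∂π) := by
    show (1 / 2) * ((∫ x, f x ∂π) - (d : ℝ) * Real.log ((1 / (d : ℝ)) * T)) = _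
    rw [hTd, hID1, hID2]
    ring
  have hID1nn : 0 ≤ ∫ x, D₁ x ∂π := integral_nonneg hD1nn
  have hID2nn : 0 ≤ ∫ x, D₂ x ∂π := integral_nonneg hD2nn
  constructor
  · rw [hYeq]; nlinarith
  constructor
  · intro hY0
    rw [hYeq] at hY0
    have hsum : (∫ x, D₁ x ∂π) + (d : ℝ) * ∫ x, D₂ x ∂π = 0 := by linarith
    have h1 : ∫ x, D₁ x ∂π = 0 := by nlinarith
    have h2 : ∫ x, D₂ x ∂π = 0 := by nlinarith
    have hae1 : ∀ᵐ x ∂π, D₁ x = 0 := by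
      have := (integral_eq_zero_iff_of_nonneg_ae
        (Filter.Eventually.of_forall hD1nn) hD1int).mp h1
      filter_upwards [this] with x hx using hx
    have hae2 : ∀ᵐ x ∂π, D₂ x = 0 := by
      have := (integral_eq_zero_iff_of_nonneg_ae
        (Filter.Eventually.of_forall hD2nn) hD2int).mp h2
      filter_upwards [this] with x hx using hx
    refine ⟨T / d, div_pos hTpos hdpos, ?_⟩
    filter_upwards [hae1, hae2] with x hx1 hx2
    have hfx : f x = (d : ℝ) * Real.log (t x / d) := by
      simp only [hD1def] at hx1; linarith
    obtain ⟨c, hc, hBx⟩ := (hkey x).2.2.mp hfx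
    -- t x = c * d
    have htx : t x = c * d := by
      show ((S a x)⁻¹ * S a₀ x).trace = c * d
      rw [hBx, inv_mul_smul_self (hpd a x), trace_smul, trace_one]
      simp
    -- t x = T
    have htT : t x = T := by
      have h3 : Real.log (t x / d) = Real.log (T / d) + (t x / d - T / d) / (T / d) := by
        rw [harg]
        simp only [hD2def, hgdef] at hx2
        linarith
      have h4 := log_tangent_eq (div_pos (htpos x) hdpos) (div_pos hTpos hdpos) h3
      rw [div_eq_div_iff hdpos.ne' hdpos.ne'] at h4
      exact mul_right_cancel₀ hdpos.ne' h4
    have hcd : c * d = T := by rw [← htx]; exact htT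
    have hcT : c = T / d := (eq_div_iff hdpos.ne').mpr hcd
    rw [hcT] at hBx
    exact hBx
  · rintro ⟨c, hc, hae⟩
    have hM : ∀ᵐ x ∂π, (S a x)⁻¹ * S a₀ x = c • (1 : Matrix (Fin d) (Fin d) ℝ) := by
      filter_upwards [hae] with x hx
      rw [hx, inv_mul_smul_self (hpd a x)]
    have hfeq : ∀ᵐ x ∂π, f x = (d : ℝ) * Real.log c := by
      filter_upwards [hM] with x hx
      show Real.log ((S a x)⁻¹ * S a₀ x).det = _
      rw [hx, det_smul, det_one, mul_one, Fintype.card_fin, Real.log_pow]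
    have hteq : ∀ᵐ x ∂π, t x = c * d := by
      filter_upwards [hM] with x hx
      show ((S a x)⁻¹ * S a₀ x).trace = _
      rw [hx, trace_smul, trace_one]
      simp
    have hIf : ∫ x, f x ∂π = (d : ℝ) * Real.log c := by
      rw [integral_congr_ae hfeq, integral_const]
      simp
    have hIT : T = c * d := by
      rw [hTdef, integral_congr_ae hteq, integral_const]
      simp
    show (1 / 2) * ((∫ x, f x ∂π) - (d : ℝ) * Real.log ((1 / (d : ℝ)) * T)) = 0
    rw [hIf, hIT]
    have : (1 / (d : ℝ)) * (c * d) = c := by field_simp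
    rw [this]
    ring
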